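/- Consider the two-player mean-payoff game G with players ○ and □, vertex a controlled by ○ and vertex b controlled by □, and edges with weights (π_○, π_□): a → a with weight (0, 1), b → b with weight (1, 0), a → b with weight (2, 2), b → a with weight (2, 2). Then for every play ρ starting at a, there exists an SPE σ̄ in G_{∥a} with ⟨σ̄⟩_a = ρ if and only if μ_○(ρ) ≥ 1 and μ_□(ρ) ≥ 1. -/

import Mathlib

noncomputable section

open Filter

/-- Prepend a finite list to an infinite sequence. -/
def prependList {V : Type} (h : List V) (ρ : ℕ → V) : ℕ → V :=
  fun n => if hn : n < h.length then h.get ⟨n, hn⟩ else ρ (n - h.length)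

/-- A (turn-based, multiplayer) game on a graph: a finite directed graph `(V, E)`
in which every vertex has an outgoing edge, a partition of the vertices among the
players (given by `control`), and an outcome function `payoff : Π → V^ω → ℝ`. -/
structure GameStruct (P V : Type) where
  E : V → V → Prop
  total : ∀ v, ∃ w, E v w
  control : V → P
  payoff : P → (ℕ → V) → ℝ

namespace GameStruct

variable {P V : Type}

/-- A strategy: given the history before the current vertex and the current vertex,
choose a successor along an edge. -/
structure Strategy (G : GameStruct P V) where
  toFun : List V → V → V
  valid : ∀ h v, G.E v (toFun h v)

/-- A complete strategy profile. -/
abbrev Profile (G : GameStruct P V) := P → G.Strategy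

def step (G : GameStruct P V) (σ : G.Profile) (p : List V × V) : List V × V :=
  (p.1 ++ [p.2], (σ (G.control p.2)).toFun p.1 p.2)

/-- The play induced by the profile `σ` from vertex `v`, after the past history `h`. -/
def play (G : GameStruct P V) (σ : G.Profile) (h : List V) (v : V) : ℕ → V :=
  fun n => ((G.step σ)^[n] (h, v)).2

/-- An infinite path in the graph. -/
def IsPlay (G : GameStruct P V) (ρ : ℕ → V) : Prop := ∀ n, G.E (ρ n) (ρ (n + 1))

def IsPlayFrom (G : GameStruct P V) (v₀ : V) (ρ : ℕ → V) : Prop := ρ 0 = v₀ ∧ G.IsPlay ρ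

/-- A history: a finite nonempty path. -/
def IsHist (G : GameStruct P V) (H : List V) : Prop := H ≠ [] ∧ List.Chain' G.E H

/-- `hv` is a history of the initialized game `G_{∥v₀}` (here `h` is the part strictly
before the last vertex `v`; it may be empty, in which case `v = v₀`). -/
def IsHistFrom (G : GameStruct P V) (v₀ : V) (h : List V) (v : V) : Prop :=
  List.Chain' G.E (h ++ [v]) ∧ (h ++ [v]).head? = some v₀

/-- The (finite) history `H` is compatible with the strategy `σ` of player `j`. -/
def CompatList (G : GameStruct P V) (σ : G.Strategy) (j : P) (H : List V) : Prop :=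
  ∀ k u w, H[k]? = some u → H[k + 1]? = some w → G.control u = j →
    w = σ.toFun (H.take k) u

/-- The history `H` is compatible with `σ̄_{-i}`, i.e. with every strategy of the
profile except possibly that of player `i`. -/
def CompatExcept (G : GameStruct P V) (i : P) (σ : G.Profile) (H : List V) : Prop :=
  ∀ j, j ≠ i → G.CompatList (σ j) j H

/-- A play `ρ` is `l`-consistent for the requirement `l : V → ℝ ∪ {±∞}`. -/
def Consistent (G : GameStruct P V) (l : V → EReal) (ρ : ℕ → V) : Prop :=
  ∀ n, l (ρ n) ≤ (G.payoff (G.control (ρ n)) (fun k => ρ (n + k)) : EReal)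

variable [DecidableEq P]

/-- The set of `l`-rational strategy profiles (for the players other than `i`) from `v`.
A profile is identified with a complete profile whose `i`-component is irrelevant. -/
def LamRat (G : GameStruct P V) (l : V → EReal) (i : P) (v : V) : Set G.Profile :=
  { σ | ∃ σi : G.Strategy, ∀ h w, G.IsHistFrom v h w → G.CompatExcept i σ (h ++ [w]) →
      G.Consistent l (G.play (Function.update σ i σi) h w) }

/-- `sup_{σ_i} μ_i(⟨σ̄_{-i}, σ_i⟩_v)`. -/
def valAgainst (G : GameStruct P V) (i : P) (σ : G.Profile) (v : V) : EReal :=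
  ⨆ σi : G.Strategy, (G.payoff i (G.play (Function.update σ i σi) [] v) : EReal)

/-- The negotiation function, with the convention `inf ∅ = +∞`. -/
def nego (G : GameStruct P V) (l : V → EReal) : V → EReal :=
  fun v => ⨅ σ ∈ G.LamRat l (G.control v) v, G.valAgainst (G.control v) σ v

/-- A game with steady negotiation. -/
def SteadyNego (G : GameStruct P V) : Prop :=
  ∀ (i : P) (v : V) (l : V → EReal),
    G.LamRat l i v = ∅ ∨
      ∃ σ ∈ G.LamRat l i v, ∀ τ ∈ G.LamRat l i v, G.valAgainst i σ v ≤ G.valAgainst i τ v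

/-- Nash equilibrium in `G_{∥v₀}`. -/
def IsNE (G : GameStruct P V) (v₀ : V) (σ : G.Profile) : Prop :=
  ∀ (i : P) (σ' : G.Strategy),
    G.payoff i (G.play (Function.update σ i σ') [] v₀) ≤ G.payoff i (G.play σ [] v₀)

/-- `ε`-subgame-perfect equilibrium in `G_{∥v₀}`. -/
def IsEpsSPE (G : GameStruct P V) (v₀ : V) (ε : ℝ) (σ : G.Profile) : Prop :=
  ∀ h v, G.IsHistFrom v₀ h v → ∀ (i : P) (σ' : G.Strategy),
    G.payoff i (prependList h (G.play (Function.update σ i σ') h v)) ≤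
      G.payoff i (prependList h (G.play σ h v)) + ε

/-- `l` is an `ε`-fixed point of the negotiation function (`±∞` is within `ε` of itself). -/
def IsEFix (G : GameStruct P V) (ε : ℝ) (l : V → EReal) : Prop :=
  ∀ v, l v - (ε : EReal) ≤ G.nego l v ∧ G.nego l v ≤ l v + (ε : EReal)

/-- Prefix-independent game. -/
def PrefixIndependent (G : GameStruct P V) : Prop :=
  ∀ (h : List V) (ρ : ℕ → V), G.IsHist h → G.IsPlay ρ → ∀ i,
    G.payoff i (prependList h ρ) = G.payoff i ρ

/-- Well-initialized game: every vertex is reachable from `v₀`. -/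
def WellInit (G : GameStruct P V) (v₀ : V) : Prop :=
  ∀ v, Relation.ReflTransGen G.E v₀ v

/-- `G` is the mean-payoff game given by the weight function `π`. -/
def IsMeanPayoff (G : GameStruct P V) (π : P → V → V → ℚ) : Prop :=
  ∀ i ρ, G.payoff i ρ =
    Filter.liminf
      (fun n : ℕ => (∑ k ∈ Finset.range n, (π i (ρ k) (ρ (k + 1)) : ℝ)) / n)
      Filter.atTop

end GameStruct

/-! The game of Example 3 of the paper. -/

inductive Pl2 where
  | circ : Pl2
  | sq : Pl2
deriving DecidableEq

instance : Fintype Pl2 := ⟨{Pl2.circ, Pl2.sq}, fun x => by cases x <;> simp⟩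

inductive V17 where
  | a : V17
  | b : V17
deriving DecidableEq

instance : Fintype V17 := ⟨{V17.a, V17.b}, fun x => by cases x <;> simp⟩

def E17 : V17 → V17 → Prop := fun _ _ => True

def ctrl17 : V17 → Pl2 := fun v =>
  match v with
  | .a => .circ
  | .b => .sq

def w17 : Pl2 → V17 → V17 → ℚ
  | .circ, .a, .a => 0
  | .sq, .a, .a => 1
  | .circ, .b, .b => 1
  | .sq, .b, .b => 0
  | .circ, .a, .b => 2
  | .sq, .a, .b => 2
  | .circ, .b, .a => 2
  | .sq, .b, .a => 2

/-! ### Auxiliary development -/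

/-- The cooperative pattern `a a a b b b a a a b b b ...`, of value `(1,1)`. -/
def target (n : ℕ) : V17 := if n % 6 < 3 then V17.a else V17.b

/-- Punishment horizon after a deviation at position `L`. -/
def pb (L : ℕ) : ℕ := (L + 2) ^ 2

lemma lt_pb (L : ℕ) : L < pb L :=
  lt_of_lt_of_le (by omega) (Nat.le_self_pow two_ne_zero _)

open Classical in
/-- The prescription function: given a prefix `H = X 0, ..., X (n-1)` of a play,
`presc ρ H` is the prescribed vertex at position `n`.  If the prefix follows `ρ`,
prescribe `ρ n`; otherwise, stay put until time `pb L` where `L` is the last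
deviation, then follow the pattern `target`. -/
noncomputable def presc (ρ : ℕ → V17) (H : List V17) : V17 :=
  if H.length = 0 then ρ 0
  else if ∀ k < H.length, H.getD k V17.a = ρ k then ρ H.length
  else if H.length ≤ pb (Nat.findGreatest
      (fun d => if _hd : d < H.length then
          H.getD d V17.a ≠ presc ρ (H.take (min d (H.length - 1))) else False)
      (H.length - 1))
    then H.getD (H.length - 1) V17.a
    else target H.length
termination_by H.length
decreasing_by all_goals (rw [List.length_take]; omega)

noncomputable abbrev pfx (X : ℕ → V17) (n : ℕ) : List V17 := List.ofFn fun i : Fin n => X i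

lemma pfx_getD {k n : ℕ} (X : ℕ → V17) (h : k < n) : (pfx X n).getD k V17.a = X k := by
  rw [List.getD_eq_getElem _ _ (by simpa using h)]
  simp

lemma pfx_take {d n : ℕ} (X : ℕ → V17) (h : d ≤ n) : (pfx X n).take d = pfx X d := by
  apply List.ext_getElem (by simp [h])
  intro i h1 h2
  simp

lemma pfx_succ (X : ℕ → V17) (n : ℕ) : pfx X (n + 1) = pfx X n ++ [X n] := by
  show List.ofFn _ = List.ofFn _ ++ [X n]
  rw [List.ofFn_succ']
  simp [List.concat_eq_append]

/-- Deviation at position `d`: the vertex `X d` differs from the prescribed one. -/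
def DevP (ρ X : ℕ → V17) (d : ℕ) : Prop := X d ≠ presc ρ (pfx X d)

lemma presc_nil (ρ : ℕ → V17) : presc ρ [] = ρ 0 := by rw [presc]; simp

lemma presc_of_prefix {ρ X : ℕ → V17} {n : ℕ} (h : ∀ k < n, X k = ρ k) :
    presc ρ (pfx X n) = ρ n := by
  rcases Nat.eq_zero_or_pos n with h0 | h0
  · subst h0; simpa using presc_nil ρ
  · rw [presc]
    have hlen : (pfx X n).length = n := by simp
    rw [if_neg (by omega), if_pos, hlen]
    intro k hk
    rw [hlen] at hk
    rw [pfx_getD X hk]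
    exact h k hk

lemma not_prefix_of_dev {ρ X : ℕ → V17} {L : ℕ} (hdev : DevP ρ X L) :
    ∃ k ≤ L, X k ≠ ρ k := by
  by_contra hall
  push_neg at hall
  exact hdev (by
    rw [presc_of_prefix (fun k hk => hall k (le_of_lt hk))]
    exact hall L le_rfl)

open Classical in
lemma presc_of_dev {ρ X : ℕ → V17} {n L : ℕ} (hdev : DevP ρ X L) (hLn : L < n)
    (hmax : ∀ e, L < e → e < n → ¬ DevP ρ X e) :
    presc ρ (pfx X n) = if n ≤ pb L then X (n - 1) else target n := by
  have hlen : (pfx X n).length = n := by simp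
  have hnotpref : ¬ (∀ k < (pfx X n).length, (pfx X n).getD k V17.a = ρ k) := by
    intro hall
    obtain ⟨k, hk, hne⟩ := not_prefix_of_dev hdev
    exact hne (by rw [← pfx_getD X (show k < n by omega)]; exact hall k (by omega))
  have hP : ∀ d, (if _hd : d < (pfx X n).length then
      (pfx X n).getD d V17.a ≠ presc ρ ((pfx X n).take (min d ((pfx X n).length - 1)))
      else False) ↔ (d < n ∧ DevP ρ X d) := by
    intro d
    rw [hlen]
    by_cases hd : d < n
    · rw [dif_pos hd]
      have hmin : min d (n - 1) = d := by omega
      rw [hmin, pfx_take X (by omega), pfx_getD X hd]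
      exact ⟨fun h => ⟨hd, h⟩, fun h => h.2⟩
    · rw [dif_neg hd]
      simp [hd]
  have hFG : Nat.findGreatest
      (fun d => if _hd : d < (pfx X n).length then
          (pfx X n).getD d V17.a ≠ presc ρ ((pfx X n).take (min d ((pfx X n).length - 1)))
          else False)
      ((pfx X n).length - 1) = L := by
    rw [Nat.findGreatest_eq_iff]
    refine ⟨by omega, fun _ => (hP L).2 ⟨hLn, hdev⟩, fun e he hen => ?_⟩
    intro hPe
    obtain ⟨hen', hde⟩ := (hP e).1 hPe
    exact hmax e he hen' hde
  rw [presc, if_neg (by omega), if_neg hnotpref, hFG, hlen,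
    pfx_getD X (show n - 1 < n by omega)]

/-- A play with no deviations is `ρ` itself. -/
lemma conf_eq_rho {ρ X : ℕ → V17} (h : ∀ d, ¬ DevP ρ X d) : ∀ n, X n = ρ n := by
  intro n
  induction n using Nat.strong_induction_on with
  | _ n ih =>
    have h1 : X n = presc ρ (pfx X n) := not_ne_iff.1 (h n)
    rw [h1, presc_of_prefix ih]

/-- After the last deviation's punishment phase, a conforming play follows `target`. -/
lemma eventually_target {ρ X : ℕ → V17} {L : ℕ} (hdev : DevP ρ X L)
    (hmax : ∀ d, L < d → ¬ DevP ρ X d) {n : ℕ} (hn : pb L < n) : X n = target n := by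
  have hLn : L < n := lt_trans (lt_pb L) hn
  have h1 : X n = presc ρ (pfx X n) := not_ne_iff.1 (hmax n hLn)
  rw [h1, presc_of_dev hdev hLn (fun e he _ => hmax e he), if_neg (by omega)]

/-! ### Weights and averages -/

/-- The mean-payoff value (as a liminf) of player `i` along the play `X`. -/
noncomputable def mp (i : Pl2) (X : ℕ → V17) : ℝ :=
  Filter.liminf
    (fun n : ℕ => (∑ k ∈ Finset.range n, (w17 i (X k) (X (k + 1)) : ℝ)) / n)
    Filter.atTop

lemma w17_nonneg (i : Pl2) (u v : V17) : (0 : ℝ) ≤ (w17 i u v : ℝ) := by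
  cases i <;> cases u <;> cases v <;> norm_num [w17]

lemma w17_le_two (i : Pl2) (u v : V17) : (w17 i u v : ℝ) ≤ 2 := by
  cases i <;> cases u <;> cases v <;> norm_num [w17]

lemma w17_self_le_one (i : Pl2) (u : V17) : (w17 i u u : ℝ) ≤ 1 := by
  cases i <;> cases u <;> norm_num [w17]

lemma avg_nonneg (i : Pl2) (X : ℕ → V17) (n : ℕ) :
    0 ≤ (∑ k ∈ Finset.range n, (w17 i (X k) (X (k + 1)) : ℝ)) / n := by
  apply div_nonneg _ (by positivity)
  exact Finset.sum_nonneg fun k _ => w17_nonneg i _ _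

lemma sum_le_two_mul (i : Pl2) (X : ℕ → V17) (n : ℕ) :
    (∑ k ∈ Finset.range n, (w17 i (X k) (X (k + 1)) : ℝ)) ≤ 2 * n := by
  calc (∑ k ∈ Finset.range n, (w17 i (X k) (X (k + 1)) : ℝ))
      ≤ ∑ _k ∈ Finset.range n, (2 : ℝ) := Finset.sum_le_sum fun k _ => w17_le_two i _ _
    _ = 2 * n := by simp [mul_comm]

lemma avg_le_two (i : Pl2) (X : ℕ → V17) (n : ℕ) :
    (∑ k ∈ Finset.range n, (w17 i (X k) (X (k + 1)) : ℝ)) / n ≤ 2 := by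
  rcases Nat.eq_zero_or_pos n with h | h
  · simp [h]
  · rw [div_le_iff₀ (by positivity)]
    simpa [mul_comm] using sum_le_two_mul i X n

lemma avg_boundedUnder_ge (i : Pl2) (X : ℕ → V17) :
    Filter.IsBoundedUnder (· ≥ ·) Filter.atTop
      (fun n : ℕ => (∑ k ∈ Finset.range n, (w17 i (X k) (X (k + 1)) : ℝ)) / n) :=
  ⟨0, Filter.eventually_map.2 (Filter.Eventually.of_forall fun n => avg_nonneg i X n)⟩

lemma avg_boundedUnder_le (i : Pl2) (X : ℕ → V17) :
    Filter.IsBoundedUnder (· ≤ ·) Filter.atTop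
      (fun n : ℕ => (∑ k ∈ Finset.range n, (w17 i (X k) (X (k + 1)) : ℝ)) / n) :=
  ⟨2, Filter.eventually_map.2 (Filter.Eventually.of_forall fun n => avg_le_two i X n)⟩

lemma mp_le_of_frequently {i : Pl2} {X : ℕ → V17} {c : ℝ}
    (h : ∀ ε > (0:ℝ), ∃ᶠ n in Filter.atTop,
      (∑ k ∈ Finset.range n, (w17 i (X k) (X (k + 1)) : ℝ)) / n ≤ c + ε) :
    mp i X ≤ c := by
  refine le_of_forall_pos_le_add fun ε hε => ?_
  exact Filter.liminf_le_of_frequently_le (h ε hε) (avg_boundedUnder_ge i X)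

lemma le_mp_of_eventually {i : Pl2} {X : ℕ → V17} {c : ℝ}
    (h : ∀ᶠ n in Filter.atTop,
      c ≤ (∑ k ∈ Finset.range n, (w17 i (X k) (X (k + 1)) : ℝ)) / n) :
    c ≤ mp i X :=
  Filter.le_liminf_of_le ((avg_boundedUnder_le i X).isCoboundedUnder_ge) h

/-! ### The periodic pattern has value 1 -/

lemma target_add6 (k : ℕ) : target (k + 6) = target k := by
  simp [target, Nat.add_mod_right]

lemma sum6_target (i : Pl2) (n : ℕ) :
    ∑ j ∈ Finset.range 6, (w17 i (target (n + j)) (target (n + j + 1)) : ℝ) = 6 := by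
  induction n with
  | zero => cases i <;> norm_num [Finset.sum_range_succ, target, w17]
  | succ n ih =>
    have key : ∑ j ∈ Finset.range 7, (w17 i (target (n + j)) (target (n + j + 1)) : ℝ)
        = (∑ j ∈ Finset.range 6, (w17 i (target (n + (j + 1))) (target (n + (j + 1) + 1)) : ℝ))
          + (w17 i (target (n + 0)) (target (n + 0 + 1)) : ℝ) :=
      Finset.sum_range_succ' _ 6
    have key2 : ∑ j ∈ Finset.range 7, (w17 i (target (n + j)) (target (n + j + 1)) : ℝ)
        = (∑ j ∈ Finset.range 6, (w17 i (target (n + j)) (target (n + j + 1)) : ℝ))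
          + (w17 i (target (n + 6)) (target (n + 6 + 1)) : ℝ) :=
      Finset.sum_range_succ _ 6
    have hshift : ∑ j ∈ Finset.range 6, (w17 i (target (n + (j + 1))) (target (n + (j + 1) + 1)) : ℝ)
        = ∑ j ∈ Finset.range 6, (w17 i (target (n + 1 + j)) (target (n + 1 + j + 1)) : ℝ) := by
      refine Finset.sum_congr rfl fun j _ => ?_
      rw [show n + (j + 1) = n + 1 + j by omega]
    have h3 : target (n + 6) = target n := target_add6 n
    have h4 : target (n + 6 + 1) = target (n + 1) := by
      rw [show n + 6 + 1 = n + 1 + 6 by omega, target_add6]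
    have hf60 : (w17 i (target (n + 6)) (target (n + 6 + 1)) : ℝ)
        = (w17 i (target (n + 0)) (target (n + 0 + 1)) : ℝ) := by
      rw [h3, h4]
      norm_num
    linarith [key, key2, hshift, hf60, ih]

lemma sum_target_bound (i : Pl2) : ∀ n : ℕ,
    |(∑ k ∈ Finset.range n, (w17 i (target k) (target (k + 1)) : ℝ)) - n| ≤ 6 := by
  intro n
  induction n using Nat.strong_induction_on with
  | _ n ih =>
    rcases lt_or_ge n 6 with h | h
    · interval_cases n <;> cases i <;>
        norm_num [Finset.sum_range_succ, target, w17, abs_le]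
    · have hsplit : ∑ k ∈ Finset.range ((n - 6) + 6), (w17 i (target k) (target (k + 1)) : ℝ)
          = (∑ k ∈ Finset.range (n - 6), (w17 i (target k) (target (k + 1)) : ℝ))
            + ∑ j ∈ Finset.range 6, (w17 i (target ((n - 6) + j)) (target ((n - 6) + j + 1)) : ℝ) :=
        Finset.sum_range_add _ _ _
      rw [sum6_target] at hsplit
      have hn6 : (n - 6) + 6 = n := by omega
      rw [hn6] at hsplit
      have hih := ih (n - 6) (by omega)
      have hc : ((n - 6 : ℕ) : ℝ) = (n : ℝ) - 6 := by
        push_cast [Nat.cast_sub (by omega : 6 ≤ n)]; ring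
      rw [hsplit]
      rw [hc] at hih
      calc |(∑ k ∈ Finset.range (n - 6), (w17 i (target k) (target (k + 1)) : ℝ)) + 6 - n|
          = |(∑ k ∈ Finset.range (n - 6), (w17 i (target k) (target (k + 1)) : ℝ)) - ((n:ℝ) - 6)| := by
            congr 1
            ring
        _ ≤ 6 := hih

lemma mp_eq_one_of_eventually_target {i : Pl2} {X : ℕ → V17} {N : ℕ}
    (h : ∀ n, N ≤ n → X n = target n) : mp i X = 1 := by
  have hfW : ∀ k, N ≤ k → (w17 i (X k) (X (k + 1)) : ℝ)
      = (w17 i (target k) (target (k + 1)) : ℝ) := by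
    intro k hk
    rw [h k hk, h (k + 1) (by omega)]
  have hsum : ∀ n, N ≤ n →
      |(∑ k ∈ Finset.range n, (w17 i (X k) (X (k + 1)) : ℝ)) - n| ≤ 4 * N + 6 := by
    intro n hn
    have hdiff : ∑ k ∈ Finset.range n,
          ((w17 i (X k) (X (k + 1)) : ℝ) - (w17 i (target k) (target (k + 1)) : ℝ))
        = ∑ k ∈ Finset.range N,
          ((w17 i (X k) (X (k + 1)) : ℝ) - (w17 i (target k) (target (k + 1)) : ℝ)) := by
      refine (Finset.sum_subset (Finset.range_subset_range.2 hn) ?_).symm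
      intro x _ hx
      rw [Finset.mem_range, not_lt] at hx
      rw [hfW x hx]
      ring
    have hsplit : (∑ k ∈ Finset.range n, (w17 i (X k) (X (k + 1)) : ℝ)) - n
        = (∑ k ∈ Finset.range N,
            ((w17 i (X k) (X (k + 1)) : ℝ) - (w17 i (target k) (target (k + 1)) : ℝ)))
          + ((∑ k ∈ Finset.range n, (w17 i (target k) (target (k + 1)) : ℝ)) - n) := by
      rw [← hdiff, Finset.sum_sub_distrib]
      ring
    rw [hsplit]
    have hb1 : |∑ k ∈ Finset.range N,
        ((w17 i (X k) (X (k + 1)) : ℝ) - (w17 i (target k) (target (k + 1)) : ℝ))| ≤ 4 * N := by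
      calc |∑ k ∈ Finset.range N,
          ((w17 i (X k) (X (k + 1)) : ℝ) - (w17 i (target k) (target (k + 1)) : ℝ))|
          ≤ ∑ k ∈ Finset.range N,
            |(w17 i (X k) (X (k + 1)) : ℝ) - (w17 i (target k) (target (k + 1)) : ℝ)| :=
            Finset.abs_sum_le_sum_abs _ _
        _ ≤ ∑ _k ∈ Finset.range N, (4 : ℝ) := by
            refine Finset.sum_le_sum fun k _ => ?_
            have h1 := w17_nonneg i (X k) (X (k + 1))
            have h2 := w17_le_two i (X k) (X (k + 1))
            have h3 := w17_nonneg i (target k) (target (k + 1))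
            have h4 := w17_le_two i (target k) (target (k + 1))
            rw [abs_le]
            constructor <;> linarith
        _ = 4 * N := by simp [mul_comm]
    calc |(∑ k ∈ Finset.range N,
            ((w17 i (X k) (X (k + 1)) : ℝ) - (w17 i (target k) (target (k + 1)) : ℝ)))
          + ((∑ k ∈ Finset.range n, (w17 i (target k) (target (k + 1)) : ℝ)) - n)|
        ≤ |∑ k ∈ Finset.range N,
            ((w17 i (X k) (X (k + 1)) : ℝ) - (w17 i (target k) (target (k + 1)) : ℝ))|
          + |(∑ k ∈ Finset.range n, (w17 i (target k) (target (k + 1)) : ℝ)) - n| :=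
          abs_add_le _ _
      _ ≤ 4 * N + 6 := add_le_add hb1 (sum_target_bound i n)
  have htend : Filter.Tendsto
      (fun n : ℕ => (∑ k ∈ Finset.range n, (w17 i (X k) (X (k + 1)) : ℝ)) / n - 1)
      Filter.atTop (nhds 0) := by
    refine squeeze_zero_norm' (a := fun n : ℕ => (4 * N + 6 : ℝ) / n) ?_
      (tendsto_const_div_atTop_nhds_zero_nat _)
    · filter_upwards [Filter.eventually_ge_atTop (max N 1)] with n hn
      have hn1 : (1 : ℕ) ≤ n := le_trans (le_max_right N 1) hn
      have hnN : N ≤ n := le_trans (le_max_left N 1) hn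
      have hnpos : (0 : ℝ) < n := by exact_mod_cast hn1
      have : (∑ k ∈ Finset.range n, (w17 i (X k) (X (k + 1)) : ℝ)) / n - 1
          = ((∑ k ∈ Finset.range n, (w17 i (X k) (X (k + 1)) : ℝ)) - n) / n := by
        field_simp
      rw [this, norm_div, Real.norm_natCast, Real.norm_eq_abs]
      gcongr
      exact hsum n hnN
  have htend1 : Filter.Tendsto
      (fun n : ℕ => (∑ k ∈ Finset.range n, (w17 i (X k) (X (k + 1)) : ℝ)) / n)
      Filter.atTop (nhds 1) := by
    have := htend.add_const 1
    simpa using this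
  exact htend1.liminf_eq

/-! ### Bookkeeping for plays and prepended histories -/

lemma play_iterate (G : GameStruct Pl2 V17) (σ : G.Profile) (h : List V17) (v : V17) :
    ∀ n, (G.step σ)^[n] (h, v) = (h ++ pfx (G.play σ h v) n, G.play σ h v n) := by
  intro n
  induction n with
  | zero => simp [GameStruct.play]
  | succ n ih =>
    have h2 : (G.step σ)^[n + 1] (h, v)
        = G.step σ (h ++ pfx (G.play σ h v) n, G.play σ h v n) := by
      rw [Function.iterate_succ_apply', ih]
    have hsnd : G.play σ h v (n + 1)
        = (σ (G.control (G.play σ h v n))).toFun (h ++ pfx (G.play σ h v) n)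
            (G.play σ h v n) := congrArg Prod.snd h2
    rw [h2]
    show ((h ++ pfx (G.play σ h v) n) ++ [G.play σ h v n], _) = _
    rw [pfx_succ, ← List.append_assoc, ← hsnd]

lemma play_zero (G : GameStruct Pl2 V17) (σ : G.Profile) (h : List V17) (v : V17) :
    G.play σ h v 0 = v := rfl

lemma play_succ (G : GameStruct Pl2 V17) (σ : G.Profile) (h : List V17) (v : V17) (n : ℕ) :
    G.play σ h v (n + 1)
      = (σ (G.control (G.play σ h v n))).toFun (h ++ pfx (G.play σ h v) n)
          (G.play σ h v n) := by
  have h2 : (G.step σ)^[n + 1] (h, v)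
      = G.step σ (h ++ pfx (G.play σ h v) n, G.play σ h v n) := by
    rw [Function.iterate_succ_apply', play_iterate]
  exact congrArg Prod.snd h2

lemma prependList_add (h : List V17) (Y : ℕ → V17) (k : ℕ) :
    prependList h Y (h.length + k) = Y k := by
  unfold prependList
  rw [dif_neg (by omega)]
  congr 1
  omega

lemma prependList_nil (Y : ℕ → V17) : prependList [] Y = Y :=
  funext fun n => by simp [prependList]

lemma pfx_prepend (h : List V17) (Y : ℕ → V17) (k : ℕ) :
    h ++ pfx Y k = pfx (prependList h Y) (h.length + k) := by
  apply List.ext_getElem (by simp)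
  intro i h1 h2
  by_cases hi : i < h.length
  · simp [List.getElem_append, prependList, hi]
  · simp [List.getElem_append, prependList, hi]

lemma prepend_play_succ (G : GameStruct Pl2 V17) (σ : G.Profile) (h : List V17) (v : V17)
    (k : ℕ) :
    prependList h (G.play σ h v) (h.length + k + 1)
      = (σ (G.control (prependList h (G.play σ h v) (h.length + k)))).toFun
          (pfx (prependList h (G.play σ h v)) (h.length + k))
          (prependList h (G.play σ h v) (h.length + k)) := by
  rw [show h.length + k + 1 = h.length + (k + 1) by omega, prependList_add, prependList_add,
    play_succ, pfx_prepend]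

lemma w17_own_eq_zero {i : Pl2} {u u' : V17} (hu : ctrl17 u = i) (hu' : ctrl17 u' = i) :
    (w17 i u u' : ℝ) = 0 := by
  cases u <;> cases u' <;> cases i <;> simp_all [ctrl17] <;> norm_num [w17]

/-! ### Strategies -/

/-- The strategy that always moves to the vertex `w`. -/
def constStrat (G : GameStruct Pl2 V17) (hE : G.E = E17) (w : V17) : G.Strategy :=
  ⟨fun _ _ => w, fun _ _ => by rw [hE]; exact trivial⟩

@[simp] lemma constStrat_toFun (G : GameStruct Pl2 V17) (hE : G.E = E17) (w : V17)
    (l : List V17) (u : V17) : (constStrat G hE w).toFun l u = w := rfl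

/-- The strategy induced by the prescription function. -/
noncomputable def prescStrat (G : GameStruct Pl2 V17) (hE : G.E = E17) (ρ : ℕ → V17) :
    G.Strategy :=
  ⟨fun l u => presc ρ (l ++ [u]), fun _ _ => by rw [hE]; exact trivial⟩

@[simp] lemma prescStrat_toFun (G : GameStruct Pl2 V17) (hE : G.E = E17) (ρ : ℕ → V17)
    (l : List V17) (u : V17) : (prescStrat G hE ρ).toFun l u = presc ρ (l ++ [u]) := rfl

/-- The other player's vertex. -/
def switchTo : Pl2 → V17
  | Pl2.circ => V17.b
  | Pl2.sq => V17.a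

lemma not_devP {ρ X : ℕ → V17} {d : ℕ} : ¬ DevP ρ X d ↔ X d = presc ρ (pfx X d) :=
  not_ne_iff

lemma one_le_mp_of_edges {i : Pl2} {X : ℕ → V17}
    (hedge : ∀ k, (1 : ℝ) ≤ (w17 i (X k) (X (k + 1)) : ℝ)) : 1 ≤ mp i X := by
  apply le_mp_of_eventually
  filter_upwards [Filter.eventually_ge_atTop 1] with n hn
  have hsum : (n : ℝ) ≤ ∑ k ∈ Finset.range n, (w17 i (X k) (X (k + 1)) : ℝ) := by
    calc (n : ℝ) = ∑ _k ∈ Finset.range n, (1 : ℝ) := by simp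
      _ ≤ _ := Finset.sum_le_sum fun k _ => hedge k
  have hnpos : (0 : ℝ) < n := by exact_mod_cast hn
  rw [le_div_iff₀ hnpos]
  linarith

/-- Against any profile, the "always switch" deviation guarantees payoff at least 1. -/
lemma forward_bound (G : GameStruct Pl2 V17) (hE : G.E = E17) (hc : G.control = ctrl17)
    (i : Pl2) (σ : G.Profile) :
    1 ≤ mp i (G.play (Function.update σ i (constStrat G hE (switchTo i))) [] V17.a) := by
  apply one_le_mp_of_edges
  intro k
  set Y := G.play (Function.update σ i (constStrat G hE (switchTo i))) [] V17.a with hYdef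
  have hs : Y (k + 1) = (Function.update σ i (constStrat G hE (switchTo i))
      (G.control (Y k))).toFun ([] ++ pfx Y k) (Y k) := play_succ G _ [] V17.a k
  by_cases hctl : G.control (Y k) = i
  · have h1 : Y (k + 1) = switchTo i := by
      rw [hs, hctl, Function.update_self, constStrat_toFun]
    have h2 : ctrl17 (Y k) = i := by rw [← hc, hctl]
    rw [h1]
    cases i with
    | circ =>
      have hYa : Y k = V17.a := by
        cases hYk : Y k with
        | a => rfl
        | b => rw [hYk] at h2; exact absurd h2 (by simp [ctrl17])
      rw [hYa]; norm_num [switchTo, w17]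
    | sq =>
      have hYb : Y k = V17.b := by
        cases hYk : Y k with
        | a => rw [hYk] at h2; exact absurd h2 (by simp [ctrl17])
        | b => rfl
      rw [hYb]; norm_num [switchTo, w17]
  · have h2 : ctrl17 (Y k) ≠ i := by rw [← hc]; exact hctl
    cases i with
    | circ =>
      have hYb : Y k = V17.b := by
        cases hYk : Y k with
        | a => rw [hYk] at h2; exact absurd (show ctrl17 V17.a = Pl2.circ from rfl) h2
        | b => rfl
      rw [hYb]
      cases Y (k + 1) <;> norm_num [w17]
    | sq =>
      have hYa : Y k = V17.a := by
        cases hYk : Y k with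
        | a => rfl
        | b => rw [hYk] at h2; exact absurd (show ctrl17 V17.b = Pl2.sq from rfl) h2
      rw [hYa]
      cases Y (k + 1) <;> norm_num [w17]

open GameStruct in
/-- In the game of Example 3, a play `ρ` from `a` is the outcome of an
SPE iff both players get payoff at least `1` in `ρ`. -/
theorem example_game_SPE_plays
    (G : GameStruct Pl2 V17) (hE : G.E = E17) (hc : G.control = ctrl17)
    (hmp : G.IsMeanPayoff w17) :
    ∀ ρ : ℕ → V17, G.IsPlayFrom V17.a ρ →
      ((∃ σ : G.Profile, G.IsEpsSPE V17.a 0 σ ∧ G.play σ [] V17.a = ρ) ↔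
        (1 ≤ G.payoff Pl2.circ ρ ∧ 1 ≤ G.payoff Pl2.sq ρ)) := by
  intro ρ hρ
  classical
  obtain ⟨hρ0, -⟩ := hρ
  have hmpmp : ∀ (i : Pl2) (X : ℕ → V17), G.payoff i X = mp i X := fun i X => hmp i X
  have hhist0 : G.IsHistFrom V17.a [] V17.a := by
    refine ⟨?_, rfl⟩
    exact List.isChain_singleton _
  constructor
  · -- Forward direction
    rintro ⟨σ, hσ, hout⟩
    have key : ∀ i : Pl2, 1 ≤ G.payoff i ρ := by
      intro i
      have hkey := hσ [] V17.a hhist0 i (constStrat G hE (switchTo i))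
      rw [prependList_nil, prependList_nil, hout, add_zero] at hkey
      refine le_trans ?_ hkey
      rw [hmpmp]
      exact forward_bound G hE hc i σ
    exact ⟨key Pl2.circ, key Pl2.sq⟩
  · -- Backward direction
    rintro ⟨h1, h2⟩
    rw [hmpmp] at h1 h2
    set σ : G.Profile := fun _ => prescStrat G hE ρ with hσdef
    have hplayout : G.play σ [] V17.a = ρ := by
      have hconf : ∀ d, ¬ DevP ρ (G.play σ [] V17.a) d := by
        intro d
        rw [not_devP]
        cases d with
        | zero =>
          have hp : pfx (G.play σ [] V17.a) 0 = ([] : List V17) := by simp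
          rw [hp, presc_nil, play_zero, hρ0]
        | succ n =>
          have hs := play_succ G σ [] V17.a n
          rw [hs]
          show presc ρ (([] ++ pfx (G.play σ [] V17.a) n) ++ [G.play σ [] V17.a n]) = _
          rw [List.nil_append, ← pfx_succ]
      funext n
      exact conf_eq_rho hconf n
    refine ⟨σ, ?_, hplayout⟩
    intro h v hhist i σ'
    set τ : G.Profile := Function.update σ i σ' with hτdef
    set X : ℕ → V17 := prependList h (G.play τ h v) with hXdef
    set Xc : ℕ → V17 := prependList h (G.play σ h v) with hXcdef
    set m : ℕ := h.length with hmdef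
    rw [hmpmp, hmpmp, add_zero]
    -- agreement on the common history
    have hagree : ∀ n, n ≤ m → X n = Xc n := by
      intro n hn
      rw [hXdef, hXcdef]
      unfold prependList
      split_ifs with hlt
      · rfl
      · have hnm : n - h.length = 0 := by omega
        rw [hnm]
        rfl
    -- the σ-play conforms beyond the history
    have hXcconf : ∀ d, m < d → Xc d = presc ρ (pfx Xc d) := by
      intro d hd
      obtain ⟨k, rfl⟩ : ∃ k, d = h.length + k + 1 := ⟨d - h.length - 1, by omega⟩
      rw [hXcdef]
      rw [prepend_play_succ]
      show presc ρ (pfx (prependList h (G.play σ h v)) (h.length + k)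
          ++ [prependList h (G.play σ h v) (h.length + k)]) = _
      rw [← pfx_succ]
    -- the τ-play conforms beyond the history at vertices not controlled by i
    have hXconf : ∀ d, m < d → G.control (X (d - 1)) ≠ i → X d = presc ρ (pfx X d) := by
      intro d hd hctl
      obtain ⟨k, rfl⟩ : ∃ k, d = h.length + k + 1 := ⟨d - h.length - 1, by omega⟩
      have hctl' : G.control (X (h.length + k)) ≠ i := by
        simpa using hctl
      rw [hXdef]
      rw [prepend_play_succ]
      have hupd : τ (G.control (prependList h (G.play τ h v) (h.length + k)))
          = prescStrat G hE ρ := by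
        have hne : G.control (prependList h (G.play τ h v) (h.length + k)) ≠ i := hctl'
        rw [hτdef] at hne ⊢
        rw [Function.update_of_ne hne]
      rw [hupd]
      show presc ρ (pfx (prependList h (G.play τ h v)) (h.length + k)
          ++ [prependList h (G.play τ h v) (h.length + k)]) = _
      rw [← pfx_succ]
    by_cases hC : ∀ d, m < d → ¬ DevP ρ X d
    · -- no deviation: the plays coincide
      have hXeq : ∀ n, X n = Xc n := by
        intro n
        induction n using Nat.strong_induction_on with
        | _ n ih =>
          rcases le_or_gt n m with hn | hn
          · exact hagree n hn
          · have e1 : X n = presc ρ (pfx X n) := not_devP.1 (hC n hn)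
            have e2 : Xc n = presc ρ (pfx Xc n) := hXcconf n hn
            have e3 : pfx X n = pfx Xc n := by
              apply List.ext_getElem (by simp)
              intro j hj1 hj2
              simp only [List.getElem_ofFn]
              exact ih j (by simpa using hj1)
            rw [e1, e3, ← e2]
      have : X = Xc := funext hXeq
      rw [this]
    · push_neg at hC
      obtain ⟨d₀, hd₀m, hdev₀⟩ := hC
      -- the conforming play has value at least 1
      have hRHS : 1 ≤ mp i Xc := by
        by_cases hall : ∀ d, ¬ DevP ρ Xc d
        · have : Xc = ρ := funext (conf_eq_rho hall)
          rw [this]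
          cases i
          · exact h1
          · exact h2
        · push_neg at hall
          obtain ⟨d₁, hd₁⟩ := hall
          have hd₁m : d₁ ≤ m := by
            by_contra hgt
            push_neg at hgt
            exact hd₁ (hXcconf d₁ hgt)
          have hLdev : DevP ρ Xc (Nat.findGreatest (DevP ρ Xc) m) :=
            Nat.findGreatest_spec hd₁m hd₁
          have hLmax : ∀ d, Nat.findGreatest (DevP ρ Xc) m < d → ¬ DevP ρ Xc d := by
            intro d hd
            rcases le_or_gt d m with hdm | hdm
            · exact Nat.findGreatest_is_greatest hd hdm
            · intro hcontra
              exact hcontra (hXcconf d hdm)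
          have heq := mp_eq_one_of_eventually_target (i := i) (X := Xc)
            (N := pb (Nat.findGreatest (DevP ρ Xc) m) + 1)
            (fun n hn => eventually_target hLdev hLmax (by omega))
          rw [heq]
      refine le_trans ?_ hRHS
      -- now: mp i X ≤ 1
      by_cases hfin : ∀ T, ∃ d, T ≤ d ∧ DevP ρ X d
      · by_cases hact : ∃ T, ∀ n, T ≤ n →
            ∃ L, DevP ρ X L ∧ L < n ∧ (∀ e, L < e → e < n → ¬ DevP ρ X e) ∧ n ≤ pb L
        · -- punishment active forever: the play gets stuck on i's vertex
          obtain ⟨T, hT⟩ := hact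
          have hstuck : ∀ n, max T (m + 1) ≤ n → G.control (X n) = i := by
            by_contra hcon
            push_neg at hcon
            obtain ⟨N, hN, hNi⟩ := hcon
            have hconst : ∀ n, N ≤ n → X n = X N ∧ G.control (X n) ≠ i := by
              intro n hn
              induction n, hn using Nat.le_induction with
              | base => exact ⟨rfl, hNi⟩
              | succ n hn ih =>
                obtain ⟨ihx, ihc⟩ := ih
                have hmove : X (n + 1) = presc ρ (pfx X (n + 1)) := by
                  refine hXconf (n + 1) (by omega) ?_
                  simpa using ihc
                obtain ⟨L, hLdev, hLlt, hLmax, hLpb⟩ := hT (n + 1) (by omega)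
                have hstay : presc ρ (pfx X (n + 1)) = X n := by
                  rw [presc_of_dev hLdev hLlt hLmax, if_pos hLpb]
                  simp
                have hx : X (n + 1) = X N := by rw [hmove, hstay, ihx]
                exact ⟨hx, by rw [hx]; exact hNi⟩
            have hnodev : ∀ d, N + 1 ≤ d → ¬ DevP ρ X d := by
              intro d hd
              rw [not_devP]
              obtain ⟨L, hLdev, hLlt, hLmax, hLpb⟩ := hT d (by omega)
              rw [presc_of_dev hLdev hLlt hLmax, if_pos hLpb]
              rw [(hconst d (by omega)).1, (hconst (d - 1) (by omega)).1]
            obtain ⟨d, hdT, hddev⟩ := hfin (N + 1)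
            exact hnodev d hdT hddev
          have hw0 : ∀ n, max T (m + 1) ≤ n → (w17 i (X n) (X (n + 1)) : ℝ) = 0 := by
            intro n hn
            have e1 : ctrl17 (X n) = i := by rw [← hc]; exact hstuck n hn
            have e2 : ctrl17 (X (n + 1)) = i := by rw [← hc]; exact hstuck (n + 1) (by omega)
            exact w17_own_eq_zero e1 e2
          apply mp_le_of_frequently
          intro ε hε
          apply Filter.Eventually.frequently
          filter_upwards [Filter.eventually_ge_atTop (2 * max T (m + 1) + 1)] with n hn
          have hsub : ∑ k ∈ Finset.range n, (w17 i (X k) (X (k + 1)) : ℝ)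
              = ∑ k ∈ Finset.range (max T (m + 1)), (w17 i (X k) (X (k + 1)) : ℝ) := by
            refine (Finset.sum_subset (Finset.range_subset_range.2 (by omega)) ?_).symm
            intro x _ hx
            rw [Finset.mem_range, not_lt] at hx
            exact hw0 x hx
          have hsum2 : ∑ k ∈ Finset.range n, (w17 i (X k) (X (k + 1)) : ℝ)
              ≤ 2 * (max T (m + 1)) := by
            rw [hsub]
            exact sum_le_two_mul i X _
          have hnpos : (0 : ℝ) < n := by
            have : (1 : ℕ) ≤ n := by omega
            exact_mod_cast this
          rw [div_le_iff₀ hnpos]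
          have hcast : (2 * (max T (m + 1)) : ℝ) + 1 ≤ (n : ℝ) := by
            have : (2 * max T (m + 1) + 1 : ℕ) ≤ n := hn
            exact_mod_cast this
          nlinarith
        · -- punishment ends infinitely often: the average drops to 1
          push_neg at hact
          apply mp_le_of_frequently
          intro ε hε
          rw [Filter.frequently_atTop]
          intro M
          obtain ⟨t, ht, htdev⟩ := hfin (max (max M m) ⌈1/ε⌉₊ + 1)
          obtain ⟨n, hn, hnact⟩ := hact (t + 1)
          have htn : t ≤ n - 1 := by omega
          have hLt : t ≤ Nat.findGreatest (DevP ρ X) (n - 1) := Nat.le_findGreatest htn htdev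
          set L := Nat.findGreatest (DevP ρ X) (n - 1) with hLdef
          have hLdev : DevP ρ X L := Nat.findGreatest_spec htn htdev
          have hLle : L ≤ n - 1 := Nat.findGreatest_le (n - 1)
          have hLlt : L < n := by omega
          have hLmax : ∀ e, L < e → e < n → ¬ DevP ρ X e := fun e he hen =>
            Nat.findGreatest_is_greatest he (by omega)
          have hpbL : pb L < n := hnact L hLdev hLlt hLmax
          have hconst : ∀ d, L + 1 ≤ d → d ≤ pb L → X d = X (L + 1) := by
            intro d hd1 hd2
            induction d, hd1 using Nat.le_induction with
            | base => rfl
            | succ d hd ih =>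
              have hnd : ¬ DevP ρ X (d + 1) := hLmax (d + 1) (by omega) (by omega)
              have e1 : X (d + 1) = presc ρ (pfx X (d + 1)) := not_devP.1 hnd
              rw [e1, presc_of_dev hLdev (by omega)
                (fun e he hen => hLmax e he (by omega)), if_pos (by omega)]
              simp only [Nat.add_sub_cancel]
              exact ih (by omega)
          refine ⟨pb L + 1, by have := lt_pb L; omega, ?_⟩
          have hlen2 : pb L + 1 = (L + 1) + ((pb L - L - 1) + 1) := by
            have := lt_pb L; omega
          have hsplit : ∑ k ∈ Finset.range (pb L + 1), (w17 i (X k) (X (k + 1)) : ℝ)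
              = (∑ k ∈ Finset.range (L + 1), (w17 i (X k) (X (k + 1)) : ℝ))
                + ∑ j ∈ Finset.range ((pb L - L - 1) + 1),
                  (w17 i (X ((L + 1) + j)) (X ((L + 1) + j + 1)) : ℝ) := by
            rw [hlen2, Finset.sum_range_add]
          have hsecond : ∑ j ∈ Finset.range ((pb L - L - 1) + 1),
              (w17 i (X ((L + 1) + j)) (X ((L + 1) + j + 1)) : ℝ)
              ≤ (pb L - L - 1 : ℕ) + 2 := by
            rw [Finset.sum_range_succ]
            have hmain : ∑ j ∈ Finset.range (pb L - L - 1),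
                (w17 i (X ((L + 1) + j)) (X ((L + 1) + j + 1)) : ℝ)
                ≤ (pb L - L - 1 : ℕ) := by
              calc ∑ j ∈ Finset.range (pb L - L - 1),
                  (w17 i (X ((L + 1) + j)) (X ((L + 1) + j + 1)) : ℝ)
                  ≤ ∑ _j ∈ Finset.range (pb L - L - 1), (1 : ℝ) := by
                    refine Finset.sum_le_sum fun j hj => ?_
                    rw [Finset.mem_range] at hj
                    have e1 : X ((L + 1) + j) = X (L + 1) :=
                      hconst _ (by omega) (by omega)
                    have e2 : X ((L + 1) + j + 1) = X (L + 1) :=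
                      hconst _ (by omega) (by omega)
                    rw [e1, e2]
                    exact w17_self_le_one i _
                _ = (pb L - L - 1 : ℕ) := by simp
            have hlast : (w17 i (X ((L + 1) + (pb L - L - 1)))
                (X ((L + 1) + (pb L - L - 1) + 1)) : ℝ) ≤ 2 := w17_le_two i _ _
            linarith
          have hfirst : ∑ k ∈ Finset.range (L + 1), (w17 i (X k) (X (k + 1)) : ℝ)
              ≤ 2 * ((L : ℝ) + 1) := by
            have := sum_le_two_mul i X (L + 1)
            push_cast at this
            linarith
          -- conclude the average bound
          have hnpos : (0 : ℝ) < (pb L + 1 : ℕ) := by positivity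
          rw [div_le_iff₀ hnpos]
          have hcastpb : ((pb L : ℕ) : ℝ) = ((L : ℝ) + 2) ^ 2 := by
            rw [pb]
            push_cast
            ring
          have hcastsub : ((pb L - L - 1 : ℕ) : ℝ) = ((pb L : ℕ) : ℝ) - L - 1 := by
            have hlt := lt_pb L
            have h' : (pb L - L - 1 : ℕ) = pb L - (L + 1) := by omega
            rw [h', Nat.cast_sub (by omega : L + 1 ≤ pb L)]
            push_cast
            ring
          have hεL : (1 : ℝ) ≤ ε * ((L : ℝ) + 2) := by
            have hceil : (1 : ℝ) / ε ≤ (⌈1/ε⌉₊ : ℕ) := Nat.le_ceil _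
            have hML : ((⌈1/ε⌉₊ : ℕ) : ℝ) ≤ (L : ℝ) := by
              have : (⌈1/ε⌉₊ : ℕ) ≤ L := by omega
              exact_mod_cast this
            have h1ε : (1 : ℝ) / ε ≤ (L : ℝ) + 2 := by linarith
            rw [div_le_iff₀ hε] at h1ε
            linarith [mul_comm ε ((L : ℝ) + 2)]
          have hsumtotal : ∑ k ∈ Finset.range (pb L + 1), (w17 i (X k) (X (k + 1)) : ℝ)
              ≤ ((pb L : ℕ) : ℝ) + L + 3 := by
            rw [hsplit]
            have := hcastsub
            push_cast at hsecond ⊢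
            linarith
          have hgoal : ((pb L : ℕ) : ℝ) + L + 3 ≤ (1 + ε) * ((pb L : ℕ) + 1 : ℕ) := by
            push_cast
            rw [hcastpb]
            nlinarith [hεL, hε.le, sq_nonneg ((L : ℝ) + 2)]
          calc ∑ k ∈ Finset.range (pb L + 1), (w17 i (X k) (X (k + 1)) : ℝ)
              ≤ ((pb L : ℕ) : ℝ) + L + 3 := hsumtotal
            _ ≤ (1 + ε) * ((pb L : ℕ) + 1 : ℕ) := hgoal
      · -- finitely many deviations: eventually the target pattern, value 1
        push_neg at hfin
        obtain ⟨T, hT⟩ := hfin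
        have hd₀T : d₀ ≤ T := by
          by_contra hgt
          push_neg at hgt
          exact hT d₀ (le_of_lt hgt) hdev₀
        have hLdev : DevP ρ X (Nat.findGreatest (DevP ρ X) T) :=
          Nat.findGreatest_spec hd₀T hdev₀
        have hLmax : ∀ d, Nat.findGreatest (DevP ρ X) T < d → ¬ DevP ρ X d := by
          intro d hd
          rcases le_or_gt d T with hdT | hdT
          · exact Nat.findGreatest_is_greatest hd hdT
          · exact hT d (le_of_lt hdT)
        have heq := mp_eq_one_of_eventually_target (i := i) (X := X)
          (N := pb (Nat.findGreatest (DevP ρ X) T) + 1)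
          (fun n hn => eventually_target hLdev hLmax (by omega))
        exact le_of_eq heq
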